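/- arXiv:1603.02204 — 2 statements merged into one kernel-verified Lean document; each statement's English description precedes it below -/
import Mathlib

section
/- Let 𝓡 = 𝓡(ℝ,𝔽) with 𝔽 an algebraically closed field and K = 𝔽{{t}} the field of Puiseux series. Let A ∈ (𝓡^× ∪ {−∞})^{n×n} be an ELT matrix whose rows are linearly dependent. Then there exists a matrix B ∈ K^{n×n} such that ELTrop(B) = A (entrywise) and the rows of B are linearly dependent over K. -/
/-- The ELT algebra `𝓡(F, L)` together with an adjoined `−∞` element:
`bot` represents `−∞`, and `elt a ℓ` represents the element `[ℓ]a`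
with tangible value `a ∈ F` and layer `ℓ ∈ L`.  Thus `ELT F L` plays the
role of `𝓡̄ = 𝓡 ∪ {−∞}`. -/
inductive ELT (F : Type) (L : Type) : Type
  | bot : ELT F L
  | elt : F → L → ELT F L

namespace ELT

variable {F : Type} {L : Type}

/-- The sorting map `s : 𝓡̄ → L`, with `s (−∞) = 0`. -/
def s [Zero L] : ELT F L → L
  | bot => 0
  | elt _ ℓ => ℓ

/-- The tangible value `t : 𝓡̄ → F ∪ {−∞}`, with `t (−∞) = −∞ = ⊥`. -/
def t : ELT F L → WithBot F
  | bot => ⊥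
  | elt a _ => (a : WithBot F)

/-- `−∞` is the additive identity of `𝓡̄`, so we register it as the zero. -/
instance : Zero (ELT F L) := ⟨bot⟩

/-- The multiplicative identity `[1]0`. -/
instance [Zero F] [One L] : One (ELT F L) := ⟨elt 0 1⟩

/-- Addition on `𝓡̄`: the element with larger tangible value wins, and layers
add in case of a tie; `−∞` is neutral. -/
instance [LinearOrder F] [Add L] : Add (ELT F L) where
  add x y :=
    match x, y with
    | bot, y => y
    | x, bot => x
    | elt a ℓ, elt b k => if a < b then elt b k else if b < a then elt a ℓ else elt a (ℓ + k)

/-- Multiplication on `𝓡̄`: tangible values add, layers multiply; `−∞` is absorbing. -/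
instance [Add F] [Mul L] : Mul (ELT F L) where
  mul x y :=
    match x, y with
    | bot, _ => bot
    | _, bot => bot
    | elt a ℓ, elt b k => elt (a + b) (ℓ * k)

/-- The surpassing relation `x ⊨ y` on `𝓡̄`: `x = y + z` for some zero-layered `z`. -/
def Surpass [LinearOrder F] [Add L] [Zero L] (x y : ELT F L) : Prop :=
  ∃ z : ELT F L, s z = 0 ∧ x = y + z

/-- `x ∈ 𝓡^× ∪ {−∞}`: either `x = −∞` or `x` has nonzero layer. -/
def TangibleOrBot [Zero L] (x : ELT F L) : Prop :=
  x = bot ∨ s x ≠ 0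

/-- The sum of a finite family of elements of `𝓡̄`. -/
def fsum [LinearOrder F] [Add L] {m : ℕ} (f : Fin m → ELT F L) : ELT F L :=
  (List.ofFn f).sum

/-- A finite family of vectors in `𝓡̄ⁿ` is linearly dependent if there are
coefficients in `𝓡^× ∪ {−∞}`, not all `−∞`, such that the corresponding linear
combination is zero-layered in every coordinate (equivalently, some subfamily
admits a combination with all coefficients in `𝓡^×` which is zero-layered
everywhere). -/
def LinDep [LinearOrder F] [Zero L] [Add L] [Add F] [Mul L] {m n : ℕ}
    (v : Fin m → Fin n → ELT F L) : Prop :=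
  ∃ a : Fin m → ELT F L, (∀ i, TangibleOrBot (a i)) ∧ (∃ i, a i ≠ bot) ∧
    ∀ j : Fin n, s (fsum fun i => a i * v i j) = 0

/-- The ELT determinant of a square ELT matrix. -/
noncomputable def det {n : ℕ} [LinearOrder F] [Add F] [Zero F] [Ring L]
    (A : Matrix (Fin n) (Fin n) (ELT F L)) : ELT F L :=
  ((Finset.univ : Finset (Equiv.Perm (Fin n))).toList.map fun σ =>
    elt 0 (((Equiv.Perm.sign σ : ℤˣ) : ℤ) : L) * (List.ofFn fun i => A i (σ i)).prod).sum

/-- The EL tropicalization of a Hahn (generalized Puiseux) series: `0 ↦ −∞`,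
and a nonzero series with leading monomial `ℓ tᵃ` goes to `[ℓ](−a)`. -/
noncomputable def ELTrop [AddCommGroup F] [LinearOrder F] [IsOrderedAddMonoid F] [Zero L] (x : HahnSeries F L) : ELT F L :=
  open scoped Classical in
  if x = 0 then bot else elt (-x.order) (x.coeff x.order)

end ELT


set_option linter.unusedSectionVars false
namespace ELTAux

open ELT

variable {𝔽 : Type} [Field 𝔽]

lemma bot_add (y : ELT ℝ 𝔽) : ELT.bot + y = y := by cases y <;> rfl
lemma add_bot (x : ELT ℝ 𝔽) : x + ELT.bot = x := by cases x <;> rfl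
lemma elt_add_elt (a b : ℝ) (ℓ k : 𝔽) :
    ELT.elt a ℓ + ELT.elt b k =
      if a < b then ELT.elt b k else if b < a then ELT.elt a ℓ else ELT.elt a (ℓ + k) := rfl
lemma elt_mul_elt (a b : ℝ) (ℓ k : 𝔽) :
    ELT.elt a ℓ * ELT.elt b k = ELT.elt (a + b) (ℓ * k) := rfl
lemma zero_def : (0 : ELT ℝ 𝔽) = ELT.bot := rfl

lemma t_eq_bot {x : ELT ℝ 𝔽} : ELT.t x = ⊥ ↔ x = ELT.bot := by
  cases x <;> simp [ELT.t]

lemma t_add (x y : ELT ℝ 𝔽) : ELT.t (x + y) = max (ELT.t x) (ELT.t y) := by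
  cases x with
  | bot => rw [bot_add]; simp [ELT.t]
  | elt a ℓ =>
    cases y with
    | bot => rw [add_bot]; simp [ELT.t]
    | elt b k =>
      rw [elt_add_elt]
      rcases lt_trichotomy a b with h | h | h
      · rw [if_pos h]
        simp [ELT.t, max_eq_right (WithBot.coe_le_coe.2 h.le)]
      · subst h
        rw [if_neg (lt_irrefl a), if_neg (lt_irrefl a)]
        simp [ELT.t]
      · rw [if_neg (not_lt.2 h.le), if_pos h]
        simp [ELT.t, max_eq_left (WithBot.coe_le_coe.2 h.le)]

/-- coefficient extraction at value `v`. -/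
noncomputable def hv (v : ℝ) (x : ELT ℝ 𝔽) : 𝔽 :=
  open scoped Classical in
  if ELT.t x = (v : WithBot ℝ) then ELT.s x else 0

lemma hv_bot (v : ℝ) : hv v (ELT.bot : ELT ℝ 𝔽) = 0 := by
  simp [hv, ELT.t]

lemma hv_add (v : ℝ) (x y : ELT ℝ 𝔽) (hx : ELT.t x ≤ (v : WithBot ℝ))
    (hy : ELT.t y ≤ (v : WithBot ℝ)) : hv v (x + y) = hv v x + hv v y := by
  cases x with
  | bot => rw [bot_add, hv_bot, zero_add]
  | elt a ℓ =>
    cases y with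
    | bot => rw [add_bot, hv_bot, add_zero]
    | elt b k =>
      rw [elt_add_elt]
      have hav : a ≤ v := WithBot.coe_le_coe.1 hx
      have hbv : b ≤ v := WithBot.coe_le_coe.1 hy
      rcases lt_trichotomy a b with h | h | h
      · rw [if_pos h]
        have hne : (a : WithBot ℝ) ≠ (v : WithBot ℝ) := by
          simp only [ne_eq, WithBot.coe_inj]
          intro hav'; exact absurd (hav' ▸ h) (not_lt.2 hbv)
        simp [hv, ELT.t, ELT.s, hne]
      · subst h
        rw [if_neg (lt_irrefl a), if_neg (lt_irrefl a)]
        by_cases hva : (a : WithBot ℝ) = (v : WithBot ℝ) <;> simp [hv, ELT.t, ELT.s, hva]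
      · rw [if_neg (not_lt.2 h.le), if_pos h]
        have hne : (b : WithBot ℝ) ≠ (v : WithBot ℝ) := by
          simp only [ne_eq, WithBot.coe_inj]
          intro hbv'; exact absurd (hbv' ▸ h) (not_lt.2 hav)
        simp [hv, ELT.t, ELT.s, hne]

lemma t_sum_le (v : ℝ) (L : List (ELT ℝ 𝔽)) (h : ∀ x ∈ L, ELT.t x ≤ (v : WithBot ℝ)) :
    ELT.t L.sum ≤ (v : WithBot ℝ) := by
  induction L with
  | nil => simp [zero_def, ELT.t]
  | cons x L ih =>
    rw [List.sum_cons, t_add]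
    exact max_le (h x (List.mem_cons_self)) (ih fun y hy => h y (List.mem_cons_of_mem _ hy))

lemma hv_sum (v : ℝ) (L : List (ELT ℝ 𝔽)) (h : ∀ x ∈ L, ELT.t x ≤ (v : WithBot ℝ)) :
    hv v L.sum = (L.map (hv v)).sum := by
  induction L with
  | nil => simp [zero_def, hv_bot]
  | cons x L ih =>
    rw [List.sum_cons, List.map_cons, List.sum_cons,
      hv_add v x L.sum (h x (List.mem_cons_self))
        (t_sum_le v L fun y hy => h y (List.mem_cons_of_mem _ hy)),
      ih fun y hy => h y (List.mem_cons_of_mem _ hy)]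

lemma t_mem_le (L : List (ELT ℝ 𝔽)) (x : ELT ℝ 𝔽) (hx : x ∈ L) : ELT.t x ≤ ELT.t L.sum := by
  induction L with
  | nil => simp at hx
  | cons y L ih =>
    rw [List.sum_cons, t_add]
    rcases List.mem_cons.1 hx with h | h
    · exact h ▸ le_max_left _ _
    · exact le_trans (ih h) (le_max_right _ _)

lemma sum_attain (L : List (ELT ℝ 𝔽)) : L.sum = ELT.bot ∨ ∃ x ∈ L, ELT.t x = ELT.t L.sum := by
  induction L with
  | nil => exact Or.inl rfl
  | cons x L ih =>
    rw [List.sum_cons]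
    rcases le_total (ELT.t x) (ELT.t L.sum) with h | h
    · rcases ih with hb | ⟨y, hy, hyt⟩
      · rw [hb] at h ⊢
        have hx : x = ELT.bot := t_eq_bot.1 (le_bot_iff.1 h)
        rw [hx, bot_add]; exact Or.inl rfl
      · exact Or.inr ⟨y, List.mem_cons_of_mem _ hy,
          by rw [t_add, max_eq_right h, hyt]⟩
    · exact Or.inr ⟨x, List.mem_cons_self, by rw [t_add, max_eq_left h]⟩

/-- lift of an ELT element to a Hahn series monomial. -/
noncomputable def lift : ELT ℝ 𝔽 → HahnSeries ℝ 𝔽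
  | ELT.bot => 0
  | ELT.elt v ℓ => HahnSeries.single (-v) ℓ

lemma lift_coeff (x : ELT ℝ 𝔽) (e : ℝ) : (lift x).coeff e = hv (-e) x := by
  cases x with
  | bot => simp [lift, hv, ELT.t]
  | elt v ℓ =>
    simp only [lift, HahnSeries.coeff_single, hv, ELT.t, ELT.s]
    by_cases h : e = -v
    · rw [if_pos h]
      exact (if_pos (show ((v : ℝ) : WithBot ℝ) = ((-e : ℝ) : WithBot ℝ) by rw [WithBot.coe_inj]; linarith)).symm
    · rw [if_neg h]
      exact (if_neg (show ¬((v : ℝ) : WithBot ℝ) = ((-e : ℝ) : WithBot ℝ) by rw [WithBot.coe_inj]; intro hh; exact h (by linarith))).symm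

lemma lift_mul (x y : ELT ℝ 𝔽) : lift (x * y) = lift x * lift y := by
  cases x with
  | bot =>
    cases y <;>
      (show (0 : HahnSeries ℝ 𝔽) = 0 * _; rw [zero_mul])
  | elt a ℓ =>
    cases y with
    | bot => show (0 : HahnSeries ℝ 𝔽) = _ * 0; rw [mul_zero]
    | elt b k =>
      rw [elt_mul_elt]
      show HahnSeries.single (-(a + b)) (ℓ * k) = _ * _
      rw [show lift (ELT.elt a ℓ) = HahnSeries.single (-a) ℓ from rfl,
        show lift (ELT.elt b k) = HahnSeries.single (-b) k from rfl,
        HahnSeries.single_mul_single, neg_add]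

lemma ELTrop_lift (x : ELT ℝ 𝔽) (hx : ELT.TangibleOrBot x) : ELT.ELTrop (lift x) = x := by
  cases x with
  | bot => simp [lift, ELT.ELTrop]
  | elt v ℓ =>
    have hℓ : ℓ ≠ 0 := by
      rcases hx with h | h
      · exact absurd h (by simp)
      · exact h
    rw [show lift (ELT.elt v ℓ) = HahnSeries.single (-v) ℓ from rfl]
    rw [ELT.ELTrop, if_neg (HahnSeries.single_ne_zero hℓ)]
    rw [HahnSeries.order_single hℓ, HahnSeries.coeff_single_same, neg_neg]

/-- the coefficient map as an additive monoid hom. -/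
noncomputable def coeffHom (e : ℝ) : HahnSeries ℝ 𝔽 →+ 𝔽 where
  toFun x := x.coeff e
  map_zero' := HahnSeries.coeff_zero
  map_add' _ _ := HahnSeries.coeff_add

lemma eltrop_single_sub (o : ℝ) (k : 𝔽) (R : HahnSeries ℝ 𝔽) (hk : k ≠ 0)
    (hR : ∀ e ≤ o, R.coeff e = 0) :
    ELT.ELTrop (HahnSeries.single o k - R) = ELT.elt (-o) k := by
  set y := HahnSeries.single o k - R with hy
  have hco : y.coeff o = k := by
    rw [hy, HahnSeries.coeff_sub, HahnSeries.coeff_single_same, hR o le_rfl, sub_zero]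
  have hy0 : y ≠ 0 := fun h => hk (by rw [← hco, h, HahnSeries.coeff_zero])
  have hord : y.order = o := by
    refine le_antisymm (HahnSeries.order_le_of_coeff_ne_zero (hco ▸ hk)) ?_
    by_contra hlt
    push_neg at hlt
    have : y.coeff y.order = 0 := by
      rw [hy, HahnSeries.coeff_sub, HahnSeries.coeff_single,
        if_neg (ne_of_lt hlt), hR _ hlt.le, sub_zero]
    exact hy0 (HahnSeries.coeff_order_eq_zero.1 this)
  rw [ELT.ELTrop, if_neg hy0, hord, hco]

end ELTAux

/-- An ELT matrix with entries in `𝓡^× ∪ {−∞}` and linearly dependent rows can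
be lifted to a matrix of Puiseux series with linearly dependent rows. -/
theorem stmt6 {𝔽 : Type} [Field 𝔽] [IsAlgClosed 𝔽] {n : ℕ}
    (A : Matrix (Fin n) (Fin n) (ELT ℝ 𝔽))
    (hent : ∀ i j, ELT.TangibleOrBot (A i j))
    (hdep : ELT.LinDep (fun i j => A i j)) :
    ∃ B : Matrix (Fin n) (Fin n) (HahnSeries ℝ 𝔽),
      (∀ i j, ELT.ELTrop (B i j) = A i j) ∧
      ∃ c : Fin n → HahnSeries ℝ 𝔽, c ≠ 0 ∧ ∀ j, ∑ i, c i * B i j = 0 := by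
  classical
  obtain ⟨a, ha, ⟨i₀, hi₀⟩, hz⟩ := hdep
  set c : Fin n → HahnSeries ℝ 𝔽 := fun i => ELTAux.lift (a i) with hc
  have hM : ∀ i j, ELT.ELTrop (ELTAux.lift (A i j)) = A i j :=
    fun i j => ELTAux.ELTrop_lift _ (hent i j)
  have key : ∀ j, ∃ col : Fin n → HahnSeries ℝ 𝔽,
      (∀ i, ELT.ELTrop (col i) = A i j) ∧ (∑ i, c i * col i = 0) := by
    intro j
    set f : Fin n → ELT ℝ 𝔽 := fun i => a i * A i j with hf
    have hzj : ELT.s ((List.ofFn f).sum) = 0 := hz j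
    have hcm : ∀ i, c i * ELTAux.lift (A i j) = ELTAux.lift (f i) :=
      fun i => (ELTAux.lift_mul _ _).symm
    have hTcoeff : ∀ e : ℝ, (∑ i, ELTAux.lift (f i)).coeff e = ∑ i, ELTAux.hv (-e) (f i) := by
      intro e
      rw [show (∑ i, ELTAux.lift (f i)).coeff e
          = ELTAux.coeffHom e (∑ i, ELTAux.lift (f i)) from rfl, map_sum]
      exact Finset.sum_congr rfl fun i _ => ELTAux.lift_coeff _ _
    rcases hsum : (List.ofFn f).sum with _ | ⟨v, ℓ⟩
    · -- all-bot column
      refine ⟨fun i => ELTAux.lift (A i j), fun i => hM i j, ?_⟩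
      have hall : ∀ i, f i = ELT.bot := by
        intro i
        have h1 := ELTAux.t_mem_le (List.ofFn f) (f i)
          ((List.mem_ofFn' f (f i)).2 ⟨i, rfl⟩)
        rw [hsum] at h1
        exact ELTAux.t_eq_bot.1 (le_bot_iff.1 h1)
      have : ∀ i ∈ Finset.univ, c i * ELTAux.lift (A i j) = (0 : HahnSeries ℝ 𝔽) := by
        intro i _
        rw [hcm i, hall i]; rfl
      rw [Finset.sum_congr rfl this, Finset.sum_const_zero]
    · -- column with a tangible maximum
      have hℓ : ℓ = 0 := by rw [hsum] at hzj; exact hzj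
      have hle : ∀ x ∈ List.ofFn f, ELT.t x ≤ ((v : ℝ) : WithBot ℝ) := by
        intro x hx
        have h1 := ELTAux.t_mem_le (List.ofFn f) x hx
        rwa [hsum] at h1
      obtain ⟨x, hxmem, hxt⟩ :=
        (ELTAux.sum_attain (List.ofFn f)).resolve_left (by rw [hsum]; simp)
      rw [hsum] at hxt
      obtain ⟨i₁, hi₁⟩ := Set.mem_range.1 ((List.mem_ofFn' f x).1 hxmem)
      have hxt' : ELT.t (f i₁) = ((v : ℝ) : WithBot ℝ) := by rw [hi₁]; exact hxt
      rcases haa : a i₁ with _ | ⟨va, ℓa⟩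
      · exfalso
        have : f i₁ = ELT.bot := by
          show a i₁ * A i₁ j = ELT.bot
          rw [haa]; cases A i₁ j <;> rfl
        rw [this] at hxt'; exact (by simp [ELT.t] at hxt')
      rcases hAA : A i₁ j with _ | ⟨vA, ℓA⟩
      · exfalso
        have : f i₁ = ELT.bot := by
          show a i₁ * A i₁ j = ELT.bot
          rw [hAA]; cases a i₁ <;> rfl
        rw [this] at hxt'; exact (by simp [ELT.t] at hxt')
      have hfi₁ : f i₁ = ELT.elt (va + vA) (ℓa * ℓA) := by
        show a i₁ * A i₁ j = _
        rw [haa, hAA, ELTAux.elt_mul_elt]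
      have hva : va + vA = v := by
        rw [hfi₁] at hxt'
        exact WithBot.coe_inj.1 hxt'
      have hℓa : ℓa ≠ 0 := by
        have h1 := ha i₁
        rw [haa] at h1
        rcases h1 with h1 | h1
        · exact absurd h1 (by simp)
        · exact h1
      have hℓA : ℓA ≠ 0 := by
        have h1 := hent i₁ j
        rw [hAA] at h1
        rcases h1 with h1 | h1
        · exact absurd h1 (by simp)
        · exact h1
      set T := ∑ i, ELTAux.lift (f i) with hT
      have hTz : ∀ e ≤ -v, T.coeff e = 0 := by
        intro e he
        rw [hT, hTcoeff]
        rcases eq_or_lt_of_le he with he' | he'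
        · have hev : -e = v := by linarith
          have h1 := ELTAux.hv_sum v (List.ofFn f) hle
          rw [hsum] at h1
          have h2 : ELTAux.hv v (ELT.elt v ℓ) = ℓ := by simp [ELTAux.hv, ELT.t, ELT.s]
          rw [h2, hℓ] at h1
          have h4 : (List.map (ELTAux.hv v) (List.ofFn f)).sum = ∑ i, ELTAux.hv v (f i) := by
            rw [List.map_ofFn, List.sum_ofFn]
            exact Finset.sum_congr rfl fun _ _ => rfl
          rw [hev, ← h4, ← h1]
        · refine Finset.sum_eq_zero fun i _ => ?_
          rw [ELTAux.hv, if_neg]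
          intro hcon
          have h1 := hle (f i) ((List.mem_ofFn' f (f i)).2 ⟨i, rfl⟩)
          rw [hcon, WithBot.coe_le_coe] at h1
          linarith
      set R := HahnSeries.single va (ℓa⁻¹ : 𝔽) * T with hR
      have hRz : ∀ e ≤ -vA, R.coeff e = 0 := by
        intro e he
        have h2 : R.coeff ((e - va) + va) = ℓa⁻¹ * T.coeff (e - va) :=
          HahnSeries.coeff_single_mul_add
        rw [show (e - va) + va = e from by ring] at h2
        rw [h2, hTz (e - va) (by linarith), mul_zero]
      refine ⟨fun i => if i = i₁ then ELTAux.lift (A i₁ j) - R else ELTAux.lift (A i j), ?_, ?_⟩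
      · intro i
        dsimp only
        by_cases hii : i = i₁
        · subst hii
          rw [if_pos rfl, hAA,
            show ELTAux.lift (ELT.elt vA ℓA) = HahnSeries.single (-vA) ℓA from rfl,
            ELTAux.eltrop_single_sub (-vA) ℓA R hℓA hRz, neg_neg]
        · rw [if_neg hii]; exact hM i j
      · have hsplit : ∀ i ∈ Finset.univ,
            c i * (if i = i₁ then ELTAux.lift (A i₁ j) - R else ELTAux.lift (A i j))
              = c i * ELTAux.lift (A i j) - (if i = i₁ then c i₁ * R else 0) := by
          intro i _
          by_cases hii : i = i₁
          · subst hii; rw [if_pos rfl, if_pos rfl, mul_sub]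
          · rw [if_neg hii, if_neg hii, sub_zero]
        rw [Finset.sum_congr rfl hsplit, Finset.sum_sub_distrib]
        have h1 : ∑ i, c i * ELTAux.lift (A i j) = T := by
          rw [hT]; exact Finset.sum_congr rfl fun i _ => hcm i
        have h2 : (∑ i, if i = i₁ then c i₁ * R else 0) = c i₁ * R := by
          rw [Finset.sum_ite_eq' Finset.univ i₁ (fun _ => c i₁ * R),
            if_pos (Finset.mem_univ i₁)]
        have h3 : c i₁ * R = T := by
          rw [hR, ← mul_assoc, hc]
          show ELTAux.lift (a i₁) * _ * T = T
          rw [haa, show ELTAux.lift (ELT.elt va ℓa) = HahnSeries.single (-va) ℓa from rfl,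
            HahnSeries.single_mul_single, neg_add_cancel, mul_inv_cancel₀ hℓa,
            HahnSeries.single_zero_one, one_mul]
        rw [h1, h2, h3, sub_self]
  choose col hcol1 hcol2 using key
  refine ⟨fun i j => col j i, fun i j => hcol1 j i, c, ?_, fun j => hcol2 j⟩
  intro h0
  have hci₀ : c i₀ = 0 := congrFun h0 i₀
  rcases haa : a i₀ with _ | ⟨va, ℓa⟩
  · exact hi₀ haa
  · have hℓa : ℓa ≠ 0 := by
      have h1 := ha i₀
      rw [haa] at h1
      rcases h1 with h1 | h1
      · exact absurd h1 (by simp)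
      · exact h1
    rw [hc] at hci₀
    simp only [haa] at hci₀
    exact HahnSeries.single_ne_zero hℓa hci₀
end

section
/- Let 𝓡 = 𝓡(F,L) be an ELT algebra with F a totally ordered abelian group and L a commutative ring with unit. If B ∈ 𝓡̄^{n×n} is left invertible (there exists A ∈ 𝓡̄^{n×n} with AB = Iₙ), then B is a generalized permutation matrix: there exist a permutation σ ∈ Sₙ and multiplicatively invertible elements c₁,…,cₙ ∈ 𝓡 such that the j-th column of B equals cⱼ·e_{σ(j)} (the entry in row σ(j) is cⱼ and all other entries of that column are −∞). -/
namespace ELT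

/-- Matrix multiplication over `𝓡̄`. -/
def matMul {F L : Type} [LinearOrder F] [Add F] [Add L] [Mul L] {n : ℕ}
    (A B : Matrix (Fin n) (Fin n) (ELT F L)) : Matrix (Fin n) (Fin n) (ELT F L) :=
  fun i j => fsum fun k => A i k * B k j

/-- The identity ELT matrix: `[1]0` on the diagonal and `−∞` off it. -/
def idMat {F L : Type} [Zero F] [One L] {n : ℕ} : Matrix (Fin n) (Fin n) (ELT F L) :=
  fun i j => if i = j then elt 0 1 else bot

end ELT

namespace ELT

variable {F L : Type} [AddCommGroup F] [LinearOrder F] [IsOrderedAddMonoid F] [CommRing L]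

lemma elt_mul_elt (a b : F) (ℓ k : L) :
    (elt a ℓ : ELT F L) * elt b k = elt (a + b) (ℓ * k) := rfl

lemma mul_eq_bot' {x y : ELT F L} : x * y = bot ↔ x = bot ∨ y = bot := by
  cases x <;> cases y <;> simp [HMul.hMul, Mul.mul]

lemma add_eq_bot' {x y : ELT F L} : x + y = bot ↔ x = bot ∧ y = bot := by
  cases x <;> cases y <;> simp [HAdd.hAdd, Add.add] <;> split_ifs <;> simp

lemma add_bot' (x : ELT F L) : x + bot = x := by
  cases x <;> rfl

lemma bot_add' (x : ELT F L) : bot + x = x := by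
  cases x <;> rfl

lemma sum_eq_bot {l : List (ELT F L)} (h : ∀ x ∈ l, x = bot) : l.sum = bot := by
  induction l with
  | nil => rfl
  | cons a l ih =>
    rw [List.sum_cons, add_eq_bot']
    exact ⟨h a (by simp), ih fun x hx => h x (by simp [hx])⟩

lemma fsum_succ {m : ℕ} (f : Fin (m + 1) → ELT F L) :
    fsum f = f 0 + fsum (fun i => f i.succ) := by
  simp [fsum, List.ofFn_succ]

lemma fsum_eq_bot {m : ℕ} {f : Fin m → ELT F L} (h : ∀ i, f i = bot) :
    fsum f = bot :=
  sum_eq_bot (by simpa using fun i => h i)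

lemma eq_bot_of_fsum {m : ℕ} {f : Fin m → ELT F L} (h : fsum f = bot) :
    ∀ i, f i = bot := by
  suffices hl : ∀ l : List (ELT F L), l.sum = bot → ∀ x ∈ l, x = bot by
    intro i
    exact hl _ h (f i) (List.mem_ofFn.mpr ⟨i, rfl⟩)
  intro l
  induction l with
  | nil => simp
  | cons a l ih =>
    rw [List.sum_cons, add_eq_bot']
    rintro ⟨h1, h2⟩ x hx
    rcases List.mem_cons.mp hx with rfl | hx
    · exact h1
    · exact ih h2 x hx

lemma fsum_eq_single {m : ℕ} : ∀ {f : Fin m → ELT F L} (k : Fin m),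
    (∀ i, i ≠ k → f i = bot) → fsum f = f k := by
  induction m with
  | zero => exact fun k => absurd k.2 (by omega)
  | succ m ih =>
    intro f k h
    rw [fsum_succ]
    rcases eq_or_ne k 0 with rfl | hk
    · rw [fsum_eq_bot (fun i => h i.succ (Fin.succ_ne_zero i)), add_bot']
    · obtain ⟨k', rfl⟩ := Fin.eq_succ_of_ne_zero hk
      rw [h 0 (Ne.symm (Fin.succ_ne_zero k')), bot_add']
      exact ih k' fun i hi => h i.succ (by simpa using hi)

end ELT

/-- A left invertible matrix over `𝓡̄` is a generalized permutation matrix: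
the `j`-th column is `cⱼ ⋅ e_{σ(j)}` for some invertible `cⱼ ∈ 𝓡` and `σ ∈ Sₙ`. -/
theorem stmt8 {F L : Type} [AddCommGroup F] [LinearOrder F] [IsOrderedAddMonoid F] [CommRing L] {n : ℕ}
    (B : Matrix (Fin n) (Fin n) (ELT F L))
    (h : ∃ A : Matrix (Fin n) (Fin n) (ELT F L), ELT.matMul A B = ELT.idMat) :
    ∃ (σ : Equiv.Perm (Fin n)) (c : Fin n → ELT F L),
      (∀ j, ∃ d : ELT F L, c j * d = ELT.elt 0 1 ∧ d * c j = ELT.elt 0 1) ∧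
      ∀ i j, B i j = if i = σ j then c j else ELT.bot := by
  classical
  obtain ⟨A, hAB⟩ := h
  have hEq : ∀ i j, ELT.fsum (fun k => A i k * B k j) =
      if i = j then ELT.elt 0 1 else ELT.bot := fun i j => congrFun (congrFun hAB i) j
  have hex : ∀ i, ∃ k, A i k ≠ ELT.bot ∧ B k i ≠ ELT.bot := by
    intro i
    by_contra hc
    push_neg at hc
    have hb : ELT.fsum (fun k => A i k * B k i) = ELT.bot := by
      apply ELT.fsum_eq_bot
      intro k
      rw [ELT.mul_eq_bot']
      by_cases hA : A i k = ELT.bot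
      · exact Or.inl hA
      · exact Or.inr (hc k hA)
    rw [hEq i i, if_pos rfl] at hb
    exact ELT.noConfusion rfl rfl (heq_of_eq hb)
  choose τ hτA hτB using hex
  have hrow : ∀ i j, j ≠ i → B (τ i) j = ELT.bot := by
    intro i j hji
    have h0 := hEq i j
    rw [if_neg (fun hij => hji hij.symm)] at h0
    have hterm := ELT.eq_bot_of_fsum h0 (τ i)
    rcases ELT.mul_eq_bot'.mp hterm with hA | hB
    · exact absurd hA (hτA i)
    · exact hB
  have hinj : Function.Injective τ := by
    intro i i' hii
    by_contra hne
    have hb := hrow i i' (Ne.symm hne)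
    rw [hii] at hb
    exact hτB i' hb
  have hbij := Finite.injective_iff_bijective.mp hinj
  have hcol : ∀ k j, k ≠ τ j → B k j = ELT.bot := by
    intro k j hk
    obtain ⟨j', rfl⟩ := hbij.2 k
    exact hrow j' j (fun hjj => hk (hjj ▸ rfl))
  have hdiag : ∀ j, A j (τ j) * B (τ j) j = ELT.elt 0 1 := by
    intro j
    have h1 := hEq j j
    rw [if_pos rfl, ELT.fsum_eq_single (τ j)
      (fun k hk => ELT.mul_eq_bot'.mpr (Or.inr (hcol k j hk)))] at h1
    exact h1
  refine ⟨Equiv.ofBijective τ hbij, fun j => B (τ j) j, fun j => ?_, fun i j => ?_⟩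
  · refine ⟨A j (τ j), ?_, hdiag j⟩
    have h1 := hdiag j
    cases hA : A j (τ j) with
    | bot => exact absurd hA (hτA j)
    | elt b m =>
      cases hB : B (τ j) j with
      | bot => exact absurd hB (hτB j)
      | elt a ℓ =>
        beta_reduce
        rw [hA, hB, ELT.elt_mul_elt] at h1
        rw [hB, ELT.elt_mul_elt]
        injection h1 with h1a h1b
        rw [add_comm, mul_comm, h1a, h1b]
  · rw [Equiv.ofBijective_apply]
    split_ifs with hij
    · rw [hij]
    · exact hcol i j hij
end
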